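/- Let k be a field of characteristic 0, let Vir = k[t,t⁻¹]∂ ⊕ k·z be the Virasoro algebra with bracket [f∂ + c₁z, g∂ + c₂z] = (fg'−f'g)∂ + Res₀(f'g''−f''g')·z, and let f ∈ k[t,t⁻¹] be nonzero. Suppose 𝔨 is a Lie subalgebra of Vir such that for every p ∈ ℤ there exists λ_p ∈ k with f·tᵖ·∂ + λ_p·z ∈ 𝔨. Then z belongs to the derived subalgebra [𝔨, 𝔨]. -/

import Mathlib

/-- Formal derivative on Laurent polynomials, sending `tⁿ` to `n·tⁿ⁻¹`. -/
noncomputable def lderiv {k : Type*} [CommRing k] (f : LaurentPolynomial k) : LaurentPolynomial k :=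
  AddMonoidAlgebra.ofCoeff (Finsupp.sum f.coeff fun n a => Finsupp.single (n - 1) ((n : k) * a))

/-- `Res₀(f)`: the coefficient of `t⁻¹` in a Laurent polynomial. -/
noncomputable def lres {k : Type*} [CommRing k] (f : LaurentPolynomial k) : k := f.coeff (-1)

/-- The Virasoro bracket on `Vir = k[t,t⁻¹]∂ ⊕ k·z`, identified with `k[t,t⁻¹] × k`:
`[(f,c₁),(g,c₂)] = (fg' − f'g, Res₀(f'g'' − f''g'))`. -/
noncomputable def virBracket {k : Type*} [CommRing k]
    (u v : LaurentPolynomial k × k) : LaurentPolynomial k × k :=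
  (u.1 * lderiv v.1 - lderiv u.1 * v.1,
    lres (lderiv u.1 * lderiv (lderiv v.1) - lderiv (lderiv u.1) * lderiv v.1))

open LaurentPolynomial

section Aux

variable {k : Type*} [CommRing k]

lemma lderiv_single (n : ℤ) (a : k) :
    lderiv (AddMonoidAlgebra.single n a : LaurentPolynomial k) = AddMonoidAlgebra.single (n-1) ((n:k)*a) := by
  unfold lderiv
  rw [AddMonoidAlgebra.coeff_single, Finsupp.sum_single_index (by simp)]
  rfl

lemma lderiv_zero : lderiv (0 : LaurentPolynomial k) = 0 := by
  unfold lderiv; simp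

lemma lderiv_add (x y : LaurentPolynomial k) : lderiv (x+y) = lderiv x + lderiv y := by
  unfold lderiv
  rw [AddMonoidAlgebra.coeff_add,
    Finsupp.sum_add_index (by simp) (by intros; simp [mul_add, Finsupp.single_add])]
  rfl

lemma lderiv_smul (c : k) (x : LaurentPolynomial k) : lderiv (c • x) = c • lderiv x := by
  unfold lderiv
  rw [AddMonoidAlgebra.coeff_smul, ← AddMonoidAlgebra.ofCoeff_smul,
    Finsupp.sum_smul_index (by simp), Finsupp.smul_sum]
  congr 1
  refine Finsupp.sum_congr fun n _ => ?_
  rw [Finsupp.smul_single]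
  congr 1
  rw [smul_eq_mul]
  ring

lemma lderiv_C_mul_T (a : k) (n : ℤ) :
    lderiv (C a * T n) = (n:k) • (C a * T (n-1)) := by
  rw [← single_eq_C_mul_T, ← single_eq_C_mul_T, lderiv_single, AddMonoidAlgebra.smul_single, smul_eq_mul]

lemma CT_mul_CT (a b : k) (m n : ℤ) :
    (C a * T m) * (C b * T n) = C (a*b) * T (m+n) := by
  rw [T_add, map_mul]; ring

lemma lderiv_mul (x y : LaurentPolynomial k) : lderiv (x*y) = lderiv x * y + x * lderiv y := by
  induction x using LaurentPolynomial.induction_on' with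
  | add p q hp hq => rw [add_mul, lderiv_add, hp, hq, lderiv_add]; ring
  | C_mul_T m a =>
    induction y using LaurentPolynomial.induction_on' with
    | add p q hp hq => rw [mul_add, lderiv_add, hp, hq, lderiv_add]; ring
    | C_mul_T n b =>
      rw [CT_mul_CT, lderiv_C_mul_T, lderiv_C_mul_T, lderiv_C_mul_T,
        smul_mul_assoc, mul_smul_comm, CT_mul_CT, CT_mul_CT,
        show m-1+n = m+n-1 from by ring, show m+(n-1) = m+n-1 from by ring,
        ← add_smul]
      congr 1
      push_cast
      ring

lemma lderiv_T (n : ℤ) : lderiv (T n : LaurentPolynomial k) = (n:k) • T (n-1) := by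
  have := lderiv_C_mul_T (1:k) n
  simpa using this

lemma lderiv_mul_T (x : LaurentPolynomial k) (n : ℤ) :
    lderiv (x * T n) = lderiv x * T n + (n:k) • (x * T (n-1)) := by
  rw [lderiv_mul, lderiv_T, mul_smul_comm]

lemma lres_add (x y : LaurentPolynomial k) : lres (x+y) = lres x + lres y := by
  unfold lres; rw [AddMonoidAlgebra.coeff_add, Finsupp.add_apply]

lemma lres_sub (x y : LaurentPolynomial k) : lres (x-y) = lres x - lres y := by
  unfold lres; rw [AddMonoidAlgebra.coeff_sub, Finsupp.sub_apply]

lemma lres_smul (c : k) (x : LaurentPolynomial k) : lres (c • x) = c * lres x := by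
  rw [lres, lres, AddMonoidAlgebra.coeff_smul, Finsupp.smul_apply, smul_eq_mul]

lemma lres_lderiv (x : LaurentPolynomial k) : lres (lderiv x) = 0 := by
  unfold lres lderiv
  rw [AddMonoidAlgebra.coeff_ofCoeff, Finsupp.sum_apply]
  refine Finset.sum_eq_zero fun n _ => ?_
  dsimp only
  rw [Finsupp.single_apply]
  split
  · next h =>
      have : n = 0 := by omega
      simp [this]
  · rfl

lemma lres_mul_T (g : LaurentPolynomial k) (r : ℤ) : lres (g * T r) = g.coeff (-1 - r) := by
  have := AddMonoidAlgebra.coeff_mul_single_apply g (1:k) r (-1)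
  unfold lres T
  rw [this, mul_one, sub_eq_add_neg]

lemma mul_T_mul_T (x y : LaurentPolynomial k) (a b : ℤ) :
    (x * T a) * (y * T b) = x * y * T (a+b) := by rw [T_add]; ring

lemma lderiv2_mul_T (f : LaurentPolynomial k) (r : ℤ) :
    lderiv (lderiv (f * T r)) = lderiv (lderiv f) * T r + (2*(r:k)) • (lderiv f * T (r-1))
      + ((r:k)*((r:k)-1)) • (f * T (r-2)) := by
  rw [lderiv_mul_T, lderiv_add, lderiv_mul_T, lderiv_smul, lderiv_mul_T,
    show r-1-1 = r-2 from by ring]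
  push_cast
  module

lemma lres_anti (X Y : LaurentPolynomial k) :
    lres (X * lderiv Y - lderiv X * Y) = 2 * lres (X * lderiv Y) := by
  have h0 : lres (lderiv (X*Y)) = 0 := lres_lderiv _
  rw [lderiv_mul, lres_add] at h0
  rw [lres_sub]
  linear_combination -h0

lemma virBracket_eq (f : LaurentPolynomial k) (p q : ℤ) (lam mu : k) :
    virBracket (f * T p, lam) (f * T q, mu) =
      ( ((q:k) - (p:k)) • (f * f * T (p+q-1)),
        2 * ( lres (lderiv f * lderiv (lderiv f) * T (p+q))
          + 2*(q:k) * lres (lderiv f * lderiv f * T (p+q-1))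
          + (q:k)*((q:k)-1) * lres (lderiv f * f * T (p+q-2))
          + (p:k) * lres (f * lderiv (lderiv f) * T (p+q-1))
          + 2*(p:k)*(q:k) * lres (f * lderiv f * T (p+q-2))
          + (p:k)*(q:k)*((q:k)-1) * lres (f * f * T (p+q-3)) ) ) := by
  unfold virBracket
  dsimp only
  refine Prod.ext ?_ ?_
  · dsimp only
    rw [lderiv_mul_T f q, lderiv_mul_T f p, mul_add, add_mul, mul_smul_comm, smul_mul_assoc,
      mul_T_mul_T, mul_T_mul_T, mul_T_mul_T, mul_T_mul_T,
      show p+(q-1) = p+q-1 from by ring, show p-1+q = p+q-1 from by ring,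
      mul_comm (lderiv f) f]
    module
  · dsimp only
    rw [lres_anti, lderiv_mul_T f p, lderiv2_mul_T f q]
    simp only [mul_add, add_mul, smul_mul_assoc, mul_smul_comm, smul_smul, mul_T_mul_T,
      lres_add, lres_smul,
      show p+(q-1) = p+q-1 from by ring, show p+(q-2) = p+q-2 from by ring,
      show p-1+q = p+q-1 from by ring, show p-1+(q-1) = p+q-2 from by ring,
      show p-1+(q-2) = p+q-3 from by ring]
    ring

end Aux

/-- Let `f ∈ k[t,t⁻¹]` be nonzero and let `𝔨` be a Lie subalgebra of the Virasoro algebra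
such that for every `p ∈ ℤ` there is `λ_p ∈ k` with `f·tᵖ·∂ + λ_p·z ∈ 𝔨`.  Then the central
element `z = (0,1)` belongs to the derived subalgebra `[𝔨,𝔨]` (the span of brackets of pairs
of elements of `𝔨`). -/
theorem vir_z_mem_derived {k : Type*} [Field k] [CharZero k]
    (f : LaurentPolynomial k) (hf : f ≠ 0)
    (𝔨 : Submodule k (LaurentPolynomial k × k))
    (hLie : ∀ u ∈ 𝔨, ∀ v ∈ 𝔨, virBracket u v ∈ 𝔨)
    (h : ∀ p : ℤ, ∃ lam : k, (f * LaurentPolynomial.T p, lam) ∈ 𝔨) :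
    ((0 : LaurentPolynomial k), (1 : k)) ∈
      Submodule.span k {w : LaurentPolynomial k × k |
        ∃ u ∈ 𝔨, ∃ v ∈ 𝔨, w = virBracket u v} := by
  classical
  have hff : f * f ≠ 0 := mul_ne_zero hf hf
  obtain ⟨m, hm⟩ : ∃ m : ℤ, (f*f).coeff m ≠ 0 := by
    by_contra hc
    push_neg at hc
    exact hff (AddMonoidAlgebra.ext (Finsupp.ext hc))
  set s : ℤ := 2 - m with hs
  choose lam hlam using h
  -- the bracket of the elements with parameters p and s-p
  have hbp : ∀ p : ℤ,
      virBracket (f * T p, lam p) (f * T (s-p), lam (s-p)) =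
      ( ((s:k) - 2*(p:k)) • (f*f*T (s-1)),
        2 * ( lres (lderiv f * lderiv (lderiv f) * T s)
          + 2*((s:k)-(p:k)) * lres (lderiv f * lderiv f * T (s-1))
          + ((s:k)-(p:k))*(((s:k)-(p:k))-1) * lres (lderiv f * f * T (s-2))
          + (p:k) * lres (f * lderiv (lderiv f) * T (s-1))
          + 2*(p:k)*((s:k)-(p:k)) * lres (f * lderiv f * T (s-2))
          + (p:k)*((s:k)-(p:k))*(((s:k)-(p:k))-1) * lres (f * f * T (s-3)) ) ) := by
    intro p
    rw [virBracket_eq f p (s-p) (lam p) (lam (s-p)),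
      show p+(s-p) = s from by ring]
    refine Prod.ext ?_ ?_
    · dsimp only
      congr 1
      push_cast
      ring
    · dsimp only
      push_cast
      ring
  set S : Set (LaurentPolynomial k × k) :=
    {w : LaurentPolynomial k × k | ∃ u ∈ 𝔨, ∃ v ∈ 𝔨, w = virBracket u v} with hS
  have hbmem : ∀ p : ℤ,
      virBracket (f * T p, lam p) (f * T (s-p), lam (s-p)) ∈ Submodule.span k S :=
    fun p => Submodule.subset_span
      ⟨(f * T p, lam p), hlam p, (f * T (s-p), lam (s-p)), hlam (s-p), rfl⟩
  -- third finite difference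
  have hwmem :
      virBracket (f * T 3, lam 3) (f * T (s-3), lam (s-3))
        - (3:k) • virBracket (f * T 2, lam 2) (f * T (s-2), lam (s-2))
        + (3:k) • virBracket (f * T 1, lam 1) (f * T (s-1), lam (s-1))
        - virBracket (f * T 0, lam 0) (f * T (s-0), lam (s-0))
        ∈ Submodule.span k S :=
    sub_mem (add_mem (sub_mem (hbmem 3) (Submodule.smul_mem _ _ (hbmem 2)))
      (Submodule.smul_mem _ _ (hbmem 1))) (hbmem 0)
  have hweq :
      virBracket (f * T 3, lam 3) (f * T (s-3), lam (s-3))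
        - (3:k) • virBracket (f * T 2, lam 2) (f * T (s-2), lam (s-2))
        + (3:k) • virBracket (f * T 1, lam 1) (f * T (s-1), lam (s-1))
        - virBracket (f * T 0, lam 0) (f * T (s-0), lam (s-0))
      = ((0 : LaurentPolynomial k), (12:k) * lres (f * f * T (s-3))) := by
    rw [hbp 3, hbp 2, hbp 1, hbp 0]
    refine Prod.ext ?_ ?_
    · simp only [Prod.fst_sub, Prod.fst_add, Prod.smul_fst]
      push_cast
      module
    · simp only [Prod.snd_sub, Prod.snd_add, Prod.smul_snd, smul_eq_mul]
      push_cast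
      ring
  have hDv : lres (f * f * T (s-3)) ≠ 0 := by
    rw [lres_mul_T, show (-1) - (s-3) = m from by rw [hs]; ring]
    exact hm
  have h12 : (12:k) * lres (f * f * T (s-3)) ≠ 0 := mul_ne_zero (by norm_num) hDv
  have hfin : ((0 : LaurentPolynomial k), (1:k))
      = ((12:k) * lres (f * f * T (s-3)))⁻¹ •
        (virBracket (f * T 3, lam 3) (f * T (s-3), lam (s-3))
          - (3:k) • virBracket (f * T 2, lam 2) (f * T (s-2), lam (s-2))
          + (3:k) • virBracket (f * T 1, lam 1) (f * T (s-1), lam (s-1))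
          - virBracket (f * T 0, lam 0) (f * T (s-0), lam (s-0))) := by
    rw [hweq, Prod.smul_mk, smul_zero, smul_eq_mul, inv_mul_cancel₀ h12]
  rw [hS] at hwmem
  rw [hfin]
  exact Submodule.smul_mem _ _ hwmem
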